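/- Let k ≥ 4 be even and m ≥ 0 integers, b(θ) = kθ/2 − 2πm·cos(θ), and b_*(θ) = (k+12)θ/2 − 2πm·cos(θ). If α₁ < α₂ are consecutive zeros of cos(b_*(θ)) in (π/2, 2π/3), then there exists exactly one β ∈ (α₁, α₂) with cos(b(β)) = 0. -/

import Mathlib

open Real Set

theorem stmt5 (k m : ℤ) (hk : 4 ≤ k) (hke : Even k) (hm : 0 ≤ m)
    (b bstar : ℝ → ℝ)
    (hb : ∀ θ, b θ = (k : ℝ) * θ / 2 - 2 * π * (m : ℝ) * Real.cos θ)
    (hbstar : ∀ θ, bstar θ = ((k : ℝ) + 12) * θ / 2 - 2 * π * (m : ℝ) * Real.cos θ)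
    (α₁ α₂ : ℝ) (hα₁ : α₁ ∈ Set.Ioo (π / 2) (2 * π / 3)) (hα₂ : α₂ ∈ Set.Ioo (π / 2) (2 * π / 3))
    (h12 : α₁ < α₂)
    (hz1 : Real.cos (bstar α₁) = 0) (hz2 : Real.cos (bstar α₂) = 0)
    (hcons : ∀ θ ∈ Set.Ioo α₁ α₂, Real.cos (bstar θ) ≠ 0) :
    ∃! β, β ∈ Set.Ioo α₁ α₂ ∧ Real.cos (b β) = 0 := by
  have hπ := Real.pi_pos
  obtain ⟨ha1l, ha1r⟩ := hα₁
  obtain ⟨ha2l, ha2r⟩ := hα₂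
  have hkR : (4:ℝ) ≤ (k:ℝ) := by exact_mod_cast hk
  have hmR : (0:ℝ) ≤ (m:ℝ) := by exact_mod_cast hm
  have hsub : Icc α₁ α₂ ⊆ Icc 0 π := by
    intro x hx
    constructor
    · nlinarith [hx.1]
    · nlinarith [hx.2]
  have hcos : ∀ x ∈ Icc α₁ α₂, ∀ y ∈ Icc α₁ α₂, x < y → Real.cos y < Real.cos x :=
    fun x hx y hy hxy => Real.strictAntiOn_cos (hsub hx) (hsub hy) hxy
  have hbmono : ∀ x ∈ Icc α₁ α₂, ∀ y ∈ Icc α₁ α₂, x < y → b x < b y := by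
    intro x hx y hy hxy
    have hc := hcos x hx y hy hxy
    have e : b y - b x = (k:ℝ)*(y-x)/2 + 2*π*(m:ℝ)*(Real.cos x - Real.cos y) := by
      rw [hb, hb]; ring
    nlinarith [mul_nonneg (mul_nonneg (by linarith : (0:ℝ) ≤ 2*π) hmR)
      (by linarith : (0:ℝ) ≤ Real.cos x - Real.cos y)]
  have hsmono : ∀ x ∈ Icc α₁ α₂, ∀ y ∈ Icc α₁ α₂, x < y → bstar x < bstar y := by
    intro x hx y hy hxy
    have hc := hcos x hx y hy hxy
    have e : bstar y - bstar x = ((k:ℝ)+12)*(y-x)/2 + 2*π*(m:ℝ)*(Real.cos x - Real.cos y) := by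
      rw [hbstar, hbstar]; ring
    nlinarith [mul_nonneg (mul_nonneg (by linarith : (0:ℝ) ≤ 2*π) hmR)
      (by linarith : (0:ℝ) ≤ Real.cos x - Real.cos y)]
  have hbceq : b = fun θ => (k : ℝ) * θ / 2 - 2 * π * (m : ℝ) * Real.cos θ := funext hb
  have hbc : Continuous b := by rw [hbceq]; fun_prop
  have hsceq : bstar = fun θ => ((k : ℝ)+12) * θ / 2 - 2 * π * (m : ℝ) * Real.cos θ :=
    funext hbstar
  have hsc : Continuous bstar := by rw [hsceq]; fun_prop
  have hmem1 : α₁ ∈ Icc α₁ α₂ := ⟨le_refl _, le_of_lt h12⟩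
  have hmem2 : α₂ ∈ Icc α₁ α₂ := ⟨le_of_lt h12, le_refl _⟩
  have hrel : ∀ θ, bstar θ = b θ + 6 * θ := by
    intro θ; rw [hb θ, hbstar θ]; ring
  obtain ⟨n₁, hn₁⟩ := Real.cos_eq_zero_iff.mp hz1
  obtain ⟨n₂, hn₂⟩ := Real.cos_eq_zero_iff.mp hz2
  have hslt : bstar α₁ < bstar α₂ := hsmono α₁ hmem1 α₂ hmem2 h12
  have hn12 : n₁ < n₂ := by
    by_contra h
    push_neg at h
    have : ((n₂:ℝ)) ≤ (n₁:ℝ) := by exact_mod_cast h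
    rw [hn₁, hn₂] at hslt
    nlinarith
  -- consecutive zeros: n₂ = n₁ + 1
  have hgap : bstar α₂ = bstar α₁ + π := by
    have hn2eq : n₂ = n₁ + 1 := by
      by_contra h
      have h2 : n₁ + 1 < n₂ := by omega
      have hv1 : bstar α₁ < (2*((n₁:ℝ)+1)+1)*π/2 := by rw [hn₁]; nlinarith
      have hv2 : (2*((n₁:ℝ)+1)+1)*π/2 < bstar α₂ := by
        rw [hn₂]
        have : ((n₁:ℝ)) + 1 < (n₂:ℝ) := by exact_mod_cast h2
        nlinarith
      obtain ⟨θ, hθmem, hθeq⟩ := intermediate_value_Ioo h12.le hsc.continuousOn ⟨hv1, hv2⟩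
      refine hcons θ hθmem ?_
      rw [hθeq]
      apply Real.cos_eq_zero_iff.mpr
      exact ⟨n₁ + 1, by push_cast; ring⟩
    rw [hn₁, hn₂, hn2eq]; push_cast; ring
  -- the target zero of cos for b
  set t : ℝ := bstar α₁ - 3*π with ht_def
  have hct : Real.cos t = 0 := by
    apply Real.cos_eq_zero_iff.mpr
    exact ⟨n₁ - 3, by rw [ht_def, hn₁]; push_cast; ring⟩
  have ht1 : b α₁ < t := by
    have := hrel α₁
    rw [ht_def]; nlinarith
  have ht2 : t < b α₂ := by
    have := hrel α₂
    rw [ht_def]; nlinarith [hgap]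
  obtain ⟨β, hβmem, hβeq⟩ := intermediate_value_Ioo h12.le hbc.continuousOn ⟨ht1, ht2⟩
  refine ⟨β, ⟨hβmem, by rw [hβeq]; exact hct⟩, ?_⟩
  rintro γ ⟨hγmem, hγz⟩
  -- show b γ = t
  have hγIcc : γ ∈ Icc α₁ α₂ := ⟨hγmem.1.le, hγmem.2.le⟩
  have hg1 : b α₁ < b γ := hbmono α₁ hmem1 γ hγIcc hγmem.1
  have hg2 : b γ < b α₂ := hbmono γ hγIcc α₂ hmem2 hγmem.2
  obtain ⟨j, hj⟩ := Real.cos_eq_zero_iff.mp hγz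
  have hlen : b α₂ - b α₁ = π - 6*(α₂ - α₁) := by
    have e1 := hrel α₁
    have e2 := hrel α₂
    linarith [hgap]
  have hdiff : ((j - n₁ + 3 : ℤ):ℝ) * π = b γ - t := by
    rw [hj, ht_def, hn₁]; push_cast; ring
  have hd0 : j - n₁ + 3 = 0 := by
    have hub : ((j - n₁ + 3 : ℤ):ℝ) * π < π := by rw [hdiff]; linarith
    have hlb : -π < ((j - n₁ + 3 : ℤ):ℝ) * π := by rw [hdiff]; linarith
    set d : ℝ := ((j - n₁ + 3 : ℤ):ℝ) with hdd
    have h1 : d < 1 := by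
      have hh : d * π < 1 * π := by rw [one_mul]; exact hub
      exact lt_of_mul_lt_mul_right hh hπ.le
    have h2 : (-1:ℝ) < d := by
      have hh : (-1) * π < d * π := by rw [neg_one_mul]; exact hlb
      exact lt_of_mul_lt_mul_right hh hπ.le
    rw [hdd] at h1 h2
    have h1' : (j - n₁ + 3 : ℤ) < 1 := by exact_mod_cast h1
    have h2' : (-1:ℤ) < (j - n₁ + 3 : ℤ) := by exact_mod_cast h2
    omega
  have hbγ : b γ = t := by
    have h0 : ((j - n₁ + 3 : ℤ):ℝ) = 0 := by exact_mod_cast hd0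
    rw [h0, zero_mul] at hdiff
    linarith
  -- injectivity
  have hβIcc : β ∈ Icc α₁ α₂ := ⟨hβmem.1.le, hβmem.2.le⟩
  rcases lt_trichotomy γ β with h | h | h
  · exfalso
    have := hbmono γ hγIcc β hβIcc h
    rw [hbγ, hβeq] at this
    exact lt_irrefl _ this
  · exact h
  · exfalso
    have := hbmono β hβIcc γ hγIcc h
    rw [hbγ, hβeq] at this
    exact lt_irrefl _ this
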